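/- Let i < j in [n], E_{ij} = e_ie_jᵀ + e_je_iᵀ, and G_E = K†(E_{ij}) = -½ J E_{ij} J with J = I - (1/n)eeᵀ. Then G_E has exactly two nonzero eigenvalues: the vectors e_{ij} = e_i - e_j and e_{ijc} = (2/n)e - (e_i + e_j) are orthogonal eigenvectors of G_E with eigenvalues 1/2 and (2-n)/(2n) respectively, and all other eigenvalues are 0. -/

import Mathlib

open Matrix BigOperators

noncomputable section

def unitMat {n : ℕ} (i j : Fin n) : Matrix (Fin n) (Fin n) ℝ :=
  Matrix.single i j 1 + Matrix.single j i 1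

def Jmat (ι : Type*) [Fintype ι] [DecidableEq ι] : Matrix ι ι ℝ :=
  (1 : Matrix ι ι ℝ) - (Fintype.card ι : ℝ)⁻¹ • Matrix.of (fun _ _ => (1 : ℝ))

lemma Jmat_mulVec (n : ℕ) (x : Fin n → ℝ) :
    Jmat (Fin n) *ᵥ x = fun t => x t - (∑ s, x s) / n := by
  funext t
  simp [Jmat, sub_mulVec, one_mulVec, smul_mulVec, mulVec, dotProduct, div_eq_inv_mul,
    Finset.mul_sum, sub_mul, one_apply, Finset.sum_sub_distrib, Finset.sum_ite_eq]

lemma unitMat_mulVec {n : ℕ} (i j : Fin n) (x : Fin n → ℝ) :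
    unitMat i j *ᵥ x = fun t => (if t = i then x j else 0) + (if t = j then x i else 0) := by
  funext t
  simp [unitMat, add_mulVec, mulVec, dotProduct, Matrix.single, ite_and, add_mul, ite_mul,
    zero_mul, one_mul, Finset.sum_add_distrib, Finset.sum_ite_irrel, Finset.sum_const_zero,
    Finset.sum_ite_eq, eq_comm]


/-- Eigenstructure of `G_E = K†(E_{ij}) = -½ J E_{ij} J`: the orthogonal
vectors `e_i - e_j` and `(2/n)e - (e_i + e_j)` are eigenvectors with
eigenvalues `1/2` and `(2-n)/(2n)`, and all other eigenvalues are `0`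
(the rank is `2`). -/
theorem eigen_Kdagger_unitMat (n : ℕ) (hn : 3 ≤ n) (i j : Fin n) (hij : i < j)
    (GE : Matrix (Fin n) (Fin n) ℝ)
    (hGE : GE = (-(1 / 2 : ℝ)) • (Jmat (Fin n) * unitMat i j * Jmat (Fin n)))
    (eij eijc : Fin n → ℝ)
    (heij : eij = (fun t => (if t = i then (1:ℝ) else 0) - (if t = j then 1 else 0)))
    (heijc : eijc = (fun t => (2 / (n : ℝ)) -
      ((if t = i then (1:ℝ) else 0) + (if t = j then 1 else 0)))) :
    GE *ᵥ eij = (1 / 2 : ℝ) • eij ∧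
    GE *ᵥ eijc = (((2 : ℝ) - n) / (2 * n)) • eijc ∧
    ∑ t, eij t * eijc t = 0 ∧
    GE.rank = 2 := by
  have hn0 : (n : ℝ) ≠ 0 := by positivity
  have hn3 : (3:ℝ) ≤ n := by exact_mod_cast hn
  have hne : i ≠ j := hij.ne
  -- general formula for GE *ᵥ x
  have hmv : ∀ x : Fin n → ℝ, GE *ᵥ x
      = ((x i - x j)/4) • eij + ((x i + x j - 2*(∑ s, x s)/n)/4) • eijc := by
    intro x
    rw [hGE, smul_mulVec, ← mulVec_mulVec, ← mulVec_mulVec, Jmat_mulVec, unitMat_mulVec,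
      Jmat_mulVec]
    funext t
    simp only [heij, heijc, Pi.add_apply, Pi.smul_apply, smul_eq_mul, Pi.neg_apply,
      Finset.sum_add_distrib, Finset.sum_ite_eq', Finset.mem_univ, if_true]
    rcases eq_or_ne t i with rfl | hti
    · simp [hne, hne.symm]; field_simp; ring
    · rcases eq_or_ne t j with rfl | htj
      · simp [hne, hne.symm]; field_simp; ring
      · simp [hti, htj]; field_simp; ring
  have heiji : eij i = 1 := by simp [heij, hne]
  have heijj : eij j = -1 := by simp [heij, hne.symm]
  have hsum : ∑ s, eij s = 0 := by
    simp [heij, Finset.sum_sub_distrib, Finset.sum_ite_eq']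
  have heijci : eijc i = 2/(n:ℝ) - 1 := by simp [heijc, hne]
  have heijcj : eijc j = 2/(n:ℝ) - 1 := by simp [heijc, hne.symm]
  have hsumc : ∑ s, eijc s = 0 := by
    simp [heijc, Finset.sum_sub_distrib, Finset.sum_add_distrib, Finset.sum_ite_eq',
      Finset.sum_const, Finset.card_univ]
    field_simp
    norm_num
  have h1 : GE *ᵥ eij = (1 / 2 : ℝ) • eij := by
    rw [hmv eij, heiji, heijj, hsum]
    norm_num
  have h2 : GE *ᵥ eijc = (((2 : ℝ) - n) / (2 * n)) • eijc := by
    rw [hmv eijc, heijci, heijcj, hsumc]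
    have h0 : ((2/(n:ℝ) - 1) - (2/(n:ℝ) - 1))/4 = 0 := by ring
    rw [h0, zero_smul, zero_add]
    congr 1
    field_simp
    ring
  have horth : ∑ t, eij t * eijc t = 0 := by
    have : ∑ t, eij t * eijc t = eijc i - eijc j := by
      simp [heij, sub_mul, ite_mul, one_mul, zero_mul, Finset.sum_sub_distrib,
        Finset.sum_ite_eq']
    rw [this, heijci, heijcj]; ring
  refine ⟨h1, h2, horth, ?_⟩
  -- rank
  have hl : (((2:ℝ) - n) / (2*n)) ≠ 0 := by
    apply div_ne_zero <;> [linarith; positivity]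
  have hmem1 : eij ∈ LinearMap.range GE.mulVecLin :=
    ⟨(2:ℝ) • eij, by rw [mulVecLin_apply, mulVec_smul, h1, smul_smul]; norm_num⟩
  have hmem2 : eijc ∈ LinearMap.range GE.mulVecLin :=
    ⟨(((2:ℝ) - n) / (2*n))⁻¹ • eijc, by
      rw [mulVecLin_apply, mulVec_smul, h2, smul_smul, inv_mul_cancel₀ hl, one_smul]⟩
  have hr : LinearMap.range GE.mulVecLin = Submodule.span ℝ {eij, eijc} := by
    apply le_antisymm
    · rintro v ⟨x, rfl⟩
      rw [mulVecLin_apply, hmv x]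
      exact Submodule.mem_span_pair.2 ⟨_, _, rfl⟩
    · rw [Submodule.span_le]
      rintro v (rfl | rfl)
      · exact hmem1
      · exact hmem2
  obtain ⟨k, hki, hkj⟩ : ∃ k : Fin n, k ≠ i ∧ k ≠ j := by
    by_contra h
    push_neg at h
    have hsubu : (Finset.univ : Finset (Fin n)) ⊆ {i, j} := by
      intro k _
      rcases eq_or_ne k i with rfl | h'
      · simp
      · simp [h k h']
    have hc := Finset.card_le_card hsubu
    have : ({i, j} : Finset (Fin n)).card ≤ 2 :=
      (Finset.card_insert_le _ _).trans (by simp)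
    simp [Finset.card_univ] at hc
    omega
  have heijk : eij k = 0 := by simp [heij, hki, hkj]
  have heijck : eijc k = 2/(n:ℝ) := by simp [heijc, hki, hkj]
  have hli : LinearIndependent ℝ ![eij, eijc] := by
    rw [LinearIndependent.pair_iff]
    intro s t hst
    have hk := congrFun hst k
    simp [heijk, heijck] at hk
    have ht : t = 0 := by
      rcases hk with h | h
      · exact h
      · exact absurd (by linarith : (n:ℝ) = 2) (by intro hh; rw [hh] at hn3; linarith)
    subst ht
    have hi := congrFun hst i
    simp [heiji] at hi
    exact ⟨hi, rfl⟩
  have hset : ({eij, eijc} : Set (Fin n → ℝ)) = Set.range ![eij, eijc] := by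
    ext v
    simp [Fin.exists_fin_two, eq_comm]
    tauto
  rw [Matrix.rank, hr, hset, finrank_span_eq_card hli]
  simp
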